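/- Let (X, 𝒪_n) be an operator space. Then for each n the function 𝒲_max is a norm on M_n(X), and the sequence of norms 𝒲_max satisfies conditions (WI) and (WII): 𝒲_max(x ⊕ y) = max(𝒲_max(x), 𝒲_max(y)) for block-diagonal matrices, and 𝒲_max(α x α*) ≤ ‖α‖² 𝒲_max(x) for all x ∈ M_m(X) and complex n×m matrices α. -/

import Mathlib

open scoped ComplexOrder Matrix ENNReal TensorProduct

universe u v

noncomputable section

/-- The block-diagonal sum `x ⊕ y` of two square matrices. -/
def blockDiag {X : Type*} [Zero X] {m n : ℕ} (x : Matrix (Fin m) (Fin m) X)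
    (y : Matrix (Fin n) (Fin n) X) : Matrix (Fin (m + n)) (Fin (m + n)) X :=
  Matrix.submatrix (Matrix.fromBlocks x 0 0 y) finSumFinEquiv.symm finSumFinEquiv.symm

/-- The block matrix `[[0, x], [0, 0]]` with `x` in the upper-right corner. -/
def cornerBlock {X : Type*} [Zero X] {n : ℕ} (x : Matrix (Fin n) (Fin n) X) :
    Matrix (Fin (n + n)) (Fin (n + n)) X :=
  Matrix.submatrix (Matrix.fromBlocks 0 x 0 0) finSumFinEquiv.symm finSumFinEquiv.symm

/-- Multiplication `α x` of a scalar matrix with a matrix over a ℂ-module. -/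
def scalarMulLeft {X : Type*} [AddCommMonoid X] [Module ℂ X] {m n k : ℕ}
    (α : Matrix (Fin m) (Fin n) ℂ) (x : Matrix (Fin n) (Fin k) X) :
    Matrix (Fin m) (Fin k) X :=
  Matrix.of fun i j => ∑ l, α i l • x l j

/-- Multiplication `x β` of a matrix over a ℂ-module with a scalar matrix. -/
def scalarMulRight {X : Type*} [AddCommMonoid X] [Module ℂ X] {m n k : ℕ}
    (x : Matrix (Fin m) (Fin n) X) (β : Matrix (Fin n) (Fin k) ℂ) :
    Matrix (Fin m) (Fin k) X :=
  Matrix.of fun i j => ∑ l, β l j • x i l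

/-- Operator norm of a rectangular complex matrix, as an operator ℓ²(Fin n) → ℓ²(Fin m). -/
def matOpNorm {m n : ℕ} (α : Matrix (Fin m) (Fin n) ℂ) : ℝ :=
  ‖LinearMap.toContinuousLinearMap (Matrix.toEuclideanLin α)‖

/-- The numerical radius of a bounded operator on a complex inner product space. -/
def numRadius {H : Type*} [NormedAddCommGroup H] [InnerProductSpace ℂ H]
    (a : H →L[ℂ] H) : ℝ :=
  ⨆ ξ : {ξ : H // ‖ξ‖ ≤ 1}, ‖(inner ℂ (ξ : H) (a ξ) : ℂ)‖

/-- The bounded operator `Hⁿ → Hᵐ` induced by an `m × n` matrix of bounded operators,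
where `Hⁿ` carries the ℓ²-direct sum structure. -/
def matOpRect {H : Type*} [NormedAddCommGroup H] [InnerProductSpace ℂ H] {m n : ℕ}
    (a : Matrix (Fin m) (Fin n) (H →L[ℂ] H)) :
    (PiLp 2 fun _ : Fin n => H) →L[ℂ] (PiLp 2 fun _ : Fin m => H) :=
  ((PiLp.continuousLinearEquiv 2 ℂ (fun _ : Fin m => H)).symm.toContinuousLinearMap) ∘L
    (ContinuousLinearMap.pi fun i => ∑ j, (a i j).comp (ContinuousLinearMap.proj j)) ∘L
    ((PiLp.continuousLinearEquiv 2 ℂ (fun _ : Fin n => H)).toContinuousLinearMap)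

/-- The bounded operator on `Hⁿ` induced by an `n × n` matrix of bounded operators. -/
def matOp {H : Type*} [NormedAddCommGroup H] [InnerProductSpace ℂ H] {n : ℕ}
    (a : Matrix (Fin n) (Fin n) (H →L[ℂ] H)) :
    (PiLp 2 fun _ : Fin n => H) →L[ℂ] (PiLp 2 fun _ : Fin n => H) :=
  matOpRect a

/-- The numerical radius of a complex `n × n` matrix, acting on `ℂⁿ`. -/
def matNumRadius {n : ℕ} (a : Matrix (Fin n) (Fin n) ℂ) : ℝ :=
  numRadius (LinearMap.toContinuousLinearMap (Matrix.toEuclideanLin a))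

/-- The identification of `M_k(M_n(ℂ))` with `M_{kn}(ℂ)`. -/
def flatten {k n : ℕ} (x : Matrix (Fin k) (Fin k) (Matrix (Fin n) (Fin n) ℂ)) :
    Matrix (Fin (k * n)) (Fin (k * n)) ℂ :=
  Matrix.of fun i j =>
    x (finProdFinEquiv.symm i).1 (finProdFinEquiv.symm j).1
      (finProdFinEquiv.symm i).2 (finProdFinEquiv.symm j).2

/-- An (abstract) numerical radius operator space: a complex vector space `X` together with a
norm `W n` on each matrix space `M_n(X)` satisfying the conditions (WI) and (WII). -/
structure NRNorm (X : Type u) [AddCommGroup X] [Module ℂ X] where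
  W : ∀ n : ℕ, Matrix (Fin n) (Fin n) X → ℝ
  nonneg : ∀ (n : ℕ) (x : Matrix (Fin n) (Fin n) X), 0 ≤ W n x
  eq_zero_iff : ∀ (n : ℕ) (x : Matrix (Fin n) (Fin n) X), W n x = 0 ↔ x = 0
  add_le : ∀ (n : ℕ) (x y : Matrix (Fin n) (Fin n) X), W n (x + y) ≤ W n x + W n y
  smul_eq : ∀ (n : ℕ) (c : ℂ) (x : Matrix (Fin n) (Fin n) X), W n (c • x) = ‖c‖ * W n x
  cond_WI : ∀ (m n : ℕ) (x : Matrix (Fin m) (Fin m) X) (y : Matrix (Fin n) (Fin n) X),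
    W (m + n) (blockDiag x y) = max (W m x) (W n y)
  cond_WII : ∀ (m n : ℕ) (α : Matrix (Fin n) (Fin m) ℂ) (x : Matrix (Fin m) (Fin m) X),
    W n (scalarMulRight (scalarMulLeft α x) αᴴ) ≤ matOpNorm α ^ 2 * W m x

/-- An (abstract) operator space: a complex vector space `X` together with a norm `O n` on each
matrix space `M_n(X)` satisfying Ruan's axioms (OI) and (OII). -/
structure OSNorm (X : Type u) [AddCommGroup X] [Module ℂ X] where
  O : ∀ n : ℕ, Matrix (Fin n) (Fin n) X → ℝ
  nonneg : ∀ (n : ℕ) (x : Matrix (Fin n) (Fin n) X), 0 ≤ O n x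
  eq_zero_iff : ∀ (n : ℕ) (x : Matrix (Fin n) (Fin n) X), O n x = 0 ↔ x = 0
  add_le : ∀ (n : ℕ) (x y : Matrix (Fin n) (Fin n) X), O n (x + y) ≤ O n x + O n y
  smul_eq : ∀ (n : ℕ) (c : ℂ) (x : Matrix (Fin n) (Fin n) X), O n (c • x) = ‖c‖ * O n x
  cond_OI : ∀ (m n : ℕ) (x : Matrix (Fin m) (Fin m) X) (y : Matrix (Fin n) (Fin n) X),
    O (m + n) (blockDiag x y) = max (O m x) (O n y)
  cond_OII : ∀ (m n : ℕ) (α : Matrix (Fin n) (Fin m) ℂ) (x : Matrix (Fin m) (Fin m) X)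
    (β : Matrix (Fin m) (Fin n) ℂ),
    O n (scalarMulRight (scalarMulLeft α x) β) ≤ matOpNorm α * O m x * matOpNorm β

/-- The completely bounded norm (valued in `[0, ∞]`) of a linear map, with respect to given
matrix norm sequences on the domain and the codomain. -/
def cbNorm {X Y : Type*} (WX : ∀ n : ℕ, Matrix (Fin n) (Fin n) X → ℝ)
    (WY : ∀ n : ℕ, Matrix (Fin n) (Fin n) Y → ℝ) (φ : X → Y) : ℝ≥0∞ :=
  ⨆ (n : ℕ) (x : Matrix (Fin n) (Fin n) X) (_ : WX n x ≤ 1),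
    ENNReal.ofReal (WY n (x.map φ))

/-- The maximal numerical radius norm affiliated with an operator space `(X, 𝒪_n)`. -/
def Wmax {X : Type u} [AddCommGroup X] [Module ℂ X] (OS : OSNorm X)
    (n : ℕ) (x : Matrix (Fin n) (Fin n) X) : ℝ :=
  sInf {t | ∃ (r : ℕ) (a : Matrix (Fin n) (Fin r) ℂ) (y : Matrix (Fin r) (Fin r) X)
      (b : Matrix (Fin r) (Fin n) ℂ),
    x = scalarMulRight (scalarMulLeft a y) b ∧ OS.O r y = 1 ∧
      t = (1 / 2) * matOpNorm (a * aᴴ + bᴴ * b)}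

/-- A complex Hilbert space together with a linear map of `X` into its bounded operators. -/
structure HilbertRep (X : Type u) [AddCommGroup X] [Module ℂ X] where
  H : Type u
  [instN : NormedAddCommGroup H]
  [instI : InnerProductSpace ℂ H]
  [instC : CompleteSpace H]
  Φ : X →ₗ[ℂ] (H →L[ℂ] H)

attribute [instance] HilbertRep.instN HilbertRep.instI HilbertRep.instC

end
noncomputable section AuxNR

open Matrix Finset

/-- rectangular diagonal sum -/
def dsum {R : Type*} [Zero R] {m n r s : ℕ} (a : Matrix (Fin m) (Fin r) R)
    (b : Matrix (Fin n) (Fin s) R) : Matrix (Fin (m + n)) (Fin (r + s)) R :=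
  Matrix.submatrix (Matrix.fromBlocks a 0 0 b) finSumFinEquiv.symm finSumFinEquiv.symm

lemma blockDiag_eq_dsum {X : Type*} [Zero X] {m n : ℕ} (x : Matrix (Fin m) (Fin m) X)
    (y : Matrix (Fin n) (Fin n) X) : blockDiag x y = dsum x y := rfl

def hcat {R : Type*} {n r s : ℕ} (a : Matrix (Fin n) (Fin r) R)
    (b : Matrix (Fin n) (Fin s) R) : Matrix (Fin n) (Fin (r + s)) R :=
  Matrix.submatrix (Matrix.fromCols a b) id finSumFinEquiv.symm

def vcat {R : Type*} {n r s : ℕ} (a : Matrix (Fin r) (Fin n) R)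
    (b : Matrix (Fin s) (Fin n) R) : Matrix (Fin (r + s)) (Fin n) R :=
  Matrix.submatrix (Matrix.fromRows a b) finSumFinEquiv.symm id

@[simp] lemma dsum_apply_cast_cast {R : Type*} [Zero R] {m n r s : ℕ}
    (a : Matrix (Fin m) (Fin r) R) (b : Matrix (Fin n) (Fin s) R) (i : Fin m) (j : Fin r) :
    dsum a b (Fin.castAdd n i) (Fin.castAdd s j) = a i j := by
  simp [dsum]

@[simp] lemma dsum_apply_cast_nat {R : Type*} [Zero R] {m n r s : ℕ}
    (a : Matrix (Fin m) (Fin r) R) (b : Matrix (Fin n) (Fin s) R) (i : Fin m) (j : Fin s) :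
    dsum a b (Fin.castAdd n i) (Fin.natAdd r j) = 0 := by
  simp [dsum]

@[simp] lemma dsum_apply_nat_cast {R : Type*} [Zero R] {m n r s : ℕ}
    (a : Matrix (Fin m) (Fin r) R) (b : Matrix (Fin n) (Fin s) R) (i : Fin n) (j : Fin r) :
    dsum a b (Fin.natAdd m i) (Fin.castAdd s j) = 0 := by
  simp [dsum]

@[simp] lemma dsum_apply_nat_nat {R : Type*} [Zero R] {m n r s : ℕ}
    (a : Matrix (Fin m) (Fin r) R) (b : Matrix (Fin n) (Fin s) R) (i : Fin n) (j : Fin s) :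
    dsum a b (Fin.natAdd m i) (Fin.natAdd r j) = b i j := by
  simp [dsum]

@[simp] lemma hcat_apply_cast {R : Type*} {n r s : ℕ} (a : Matrix (Fin n) (Fin r) R)
    (b : Matrix (Fin n) (Fin s) R) (i : Fin n) (j : Fin r) :
    hcat a b i (Fin.castAdd s j) = a i j := by
  simp [hcat]

@[simp] lemma hcat_apply_nat {R : Type*} {n r s : ℕ} (a : Matrix (Fin n) (Fin r) R)
    (b : Matrix (Fin n) (Fin s) R) (i : Fin n) (j : Fin s) :
    hcat a b i (Fin.natAdd r j) = b i j := by
  simp [hcat]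

@[simp] lemma vcat_apply_cast {R : Type*} {n r s : ℕ} (a : Matrix (Fin r) (Fin n) R)
    (b : Matrix (Fin s) (Fin n) R) (i : Fin r) (j : Fin n) :
    vcat a b (Fin.castAdd s i) j = a i j := by
  simp [vcat]

@[simp] lemma vcat_apply_nat {R : Type*} {n r s : ℕ} (a : Matrix (Fin r) (Fin n) R)
    (b : Matrix (Fin s) (Fin n) R) (i : Fin s) (j : Fin n) :
    vcat a b (Fin.natAdd r i) j = b i j := by
  simp [vcat]

section Scal
variable {X : Type u} [AddCommGroup X] [Module ℂ X]

lemma sl_mul {m n k p : ℕ} (α : Matrix (Fin m) (Fin n) ℂ) (β : Matrix (Fin n) (Fin k) ℂ)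
    (x : Matrix (Fin k) (Fin p) X) :
    scalarMulLeft (α * β) x = scalarMulLeft α (scalarMulLeft β x) := by
  ext i j
  simp only [scalarMulLeft, Matrix.mul_apply, of_apply, Finset.smul_sum, Finset.sum_smul,
    smul_smul]
  rw [Finset.sum_comm]

lemma sr_mul {m n k p : ℕ} (x : Matrix (Fin m) (Fin n) X) (β : Matrix (Fin n) (Fin k) ℂ)
    (γ : Matrix (Fin k) (Fin p) ℂ) :
    scalarMulRight x (β * γ) = scalarMulRight (scalarMulRight x β) γ := by
  ext i j
  simp only [scalarMulRight, Matrix.mul_apply, of_apply, Finset.smul_sum, Finset.sum_smul,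
    smul_smul]
  rw [Finset.sum_comm]
  congr 1; ext l; congr 1; ext k; rw [mul_comm]

lemma sl_sr_comm {m n k p : ℕ} (α : Matrix (Fin m) (Fin n) ℂ) (x : Matrix (Fin n) (Fin k) X)
    (β : Matrix (Fin k) (Fin p) ℂ) :
    scalarMulLeft α (scalarMulRight x β) = scalarMulRight (scalarMulLeft α x) β := by
  ext i j
  simp only [scalarMulLeft, scalarMulRight, of_apply, Finset.smul_sum, smul_smul]
  rw [Finset.sum_comm]
  congr 1; ext l; congr 1; ext k; rw [mul_comm]

lemma sl_smul_one {n k : ℕ} (c : ℂ) (x : Matrix (Fin n) (Fin k) X) :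
    scalarMulLeft (c • (1 : Matrix (Fin n) (Fin n) ℂ)) x = c • x := by
  ext i j
  simp [scalarMulLeft, Matrix.one_apply, ite_smul, Finset.sum_ite_eq, smul_smul]

lemma sr_smul_one {n k : ℕ} (c : ℂ) (x : Matrix (Fin k) (Fin n) X) :
    scalarMulRight x (c • (1 : Matrix (Fin n) (Fin n) ℂ)) = c • x := by
  ext i j
  simp [scalarMulRight, Matrix.one_apply, ite_smul, Finset.sum_ite_eq', smul_smul]

lemma sl_one {n k : ℕ} (x : Matrix (Fin n) (Fin k) X) :
    scalarMulLeft (1 : Matrix (Fin n) (Fin n) ℂ) x = x := by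
  have := sl_smul_one (1 : ℂ) x; simpa using this

lemma sr_one {n k : ℕ} (x : Matrix (Fin k) (Fin n) X) :
    scalarMulRight x (1 : Matrix (Fin n) (Fin n) ℂ) = x := by
  have := sr_smul_one (1 : ℂ) x; simpa using this

@[simp] lemma sl_zero {m n k : ℕ} (x : Matrix (Fin n) (Fin k) X) :
    scalarMulLeft (0 : Matrix (Fin m) (Fin n) ℂ) x = 0 := by
  ext i j; simp [scalarMulLeft]

@[simp] lemma sr_zero {m n k : ℕ} (x : Matrix (Fin m) (Fin n) X) :
    scalarMulRight x (0 : Matrix (Fin n) (Fin k) ℂ) = 0 := by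
  ext i j; simp [scalarMulRight]

@[simp] lemma sl_zero_right {m n k : ℕ} (α : Matrix (Fin m) (Fin n) ℂ) :
    scalarMulLeft α (0 : Matrix (Fin n) (Fin k) X) = 0 := by
  ext i j; simp [scalarMulLeft]

@[simp] lemma sr_zero_left {m n k : ℕ} (β : Matrix (Fin n) (Fin k) ℂ) :
    scalarMulRight (0 : Matrix (Fin m) (Fin n) X) β = 0 := by
  ext i j; simp [scalarMulRight]

lemma sl_smul {m n k : ℕ} (c : ℂ) (α : Matrix (Fin m) (Fin n) ℂ)
    (x : Matrix (Fin n) (Fin k) X) :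
    scalarMulLeft (c • α) x = c • scalarMulLeft α x := by
  ext i j
  simp [scalarMulLeft, Finset.smul_sum, smul_smul]

lemma sr_smul {m n k : ℕ} (c : ℂ) (β : Matrix (Fin n) (Fin k) ℂ)
    (x : Matrix (Fin m) (Fin n) X) :
    scalarMulRight x (c • β) = c • scalarMulRight x β := by
  ext i j
  simp [scalarMulRight, Finset.smul_sum, smul_smul]

lemma sr_smul_left {m n k : ℕ} (c : ℂ) (x : Matrix (Fin m) (Fin n) X)
    (β : Matrix (Fin n) (Fin k) ℂ) :
    scalarMulRight (c • x) β = c • scalarMulRight x β := by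
  ext i j
  simp only [scalarMulRight, of_apply, Matrix.smul_apply, Finset.smul_sum, smul_smul]
  congr 1; ext l; rw [mul_comm]

lemma sl_dsum_dsum {m n r s k p : ℕ} (α : Matrix (Fin m) (Fin r) ℂ)
    (α' : Matrix (Fin n) (Fin s) ℂ) (x : Matrix (Fin r) (Fin k) X)
    (x' : Matrix (Fin s) (Fin p) X) :
    scalarMulLeft (dsum α α') (dsum x x') = dsum (scalarMulLeft α x) (scalarMulLeft α' x') := by
  ext i j
  induction i using Fin.addCases <;> induction j using Fin.addCases <;>
    simp [scalarMulLeft, Fin.sum_univ_add]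

lemma sr_dsum_dsum {m n r s k p : ℕ} (x : Matrix (Fin k) (Fin m) X)
    (x' : Matrix (Fin p) (Fin n) X) (β : Matrix (Fin m) (Fin r) ℂ)
    (β' : Matrix (Fin n) (Fin s) ℂ) :
    scalarMulRight (dsum x x') (dsum β β') = dsum (scalarMulRight x β) (scalarMulRight x' β') := by
  ext i j
  induction i using Fin.addCases <;> induction j using Fin.addCases <;>
    simp [scalarMulRight, Fin.sum_univ_add]

lemma sl_hcat_dsum {n r s k p : ℕ} (a : Matrix (Fin n) (Fin r) ℂ)
    (a' : Matrix (Fin n) (Fin s) ℂ) (x : Matrix (Fin r) (Fin k) X)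
    (x' : Matrix (Fin s) (Fin p) X) :
    scalarMulLeft (hcat a a') (dsum x x') = hcat (scalarMulLeft a x) (scalarMulLeft a' x') := by
  ext i j
  induction j using Fin.addCases <;> simp [scalarMulLeft, Fin.sum_univ_add]

lemma sr_hcat_vcat {n r s k : ℕ} (z : Matrix (Fin n) (Fin r) X)
    (z' : Matrix (Fin n) (Fin s) X) (b : Matrix (Fin r) (Fin k) ℂ)
    (b' : Matrix (Fin s) (Fin k) ℂ) :
    scalarMulRight (hcat z z') (vcat b b') = scalarMulRight z b + scalarMulRight z' b' := by
  ext i j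
  simp [scalarMulRight, Fin.sum_univ_add, finSumFinEquiv_apply_left,
    finSumFinEquiv_apply_right]

end Scal

section MatC

lemma dsum_mul_dsum {m n r s k p : ℕ} (α : Matrix (Fin m) (Fin r) ℂ)
    (β : Matrix (Fin n) (Fin s) ℂ) (γ : Matrix (Fin r) (Fin k) ℂ)
    (δ : Matrix (Fin s) (Fin p) ℂ) :
    dsum α β * dsum γ δ = dsum (α * γ) (β * δ) := by
  unfold dsum
  rw [Matrix.submatrix_mul_equiv, Matrix.fromBlocks_multiply]
  simp

lemma dsum_conjTranspose {m n r s : ℕ} (α : Matrix (Fin m) (Fin r) ℂ)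
    (β : Matrix (Fin n) (Fin s) ℂ) : (dsum α β)ᴴ = dsum αᴴ βᴴ := by
  unfold dsum
  rw [Matrix.conjTranspose_submatrix, Matrix.fromBlocks_conjTranspose]
  simp

lemma dsum_add {m n r s : ℕ} (α γ : Matrix (Fin m) (Fin r) ℂ)
    (β δ : Matrix (Fin n) (Fin s) ℂ) : dsum α β + dsum γ δ = dsum (α + γ) (β + δ) := by
  ext i j
  induction i using Fin.addCases <;> induction j using Fin.addCases <;> simp

lemma hcat_conjTranspose {n r s : ℕ} (a : Matrix (Fin n) (Fin r) ℂ)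
    (b : Matrix (Fin n) (Fin s) ℂ) : (hcat a b)ᴴ = vcat aᴴ bᴴ := by
  unfold hcat vcat
  rw [Matrix.conjTranspose_submatrix, Matrix.conjTranspose_fromCols_eq_fromRows_conjTranspose]

lemma vcat_conjTranspose {n r s : ℕ} (a : Matrix (Fin r) (Fin n) ℂ)
    (b : Matrix (Fin s) (Fin n) ℂ) : (vcat a b)ᴴ = hcat aᴴ bᴴ := by
  unfold hcat vcat
  rw [Matrix.conjTranspose_submatrix, Matrix.conjTranspose_fromRows_eq_fromCols_conjTranspose]

lemma hcat_mul_vcat {n r s k : ℕ} (a : Matrix (Fin n) (Fin r) ℂ)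
    (a' : Matrix (Fin n) (Fin s) ℂ) (b : Matrix (Fin r) (Fin k) ℂ)
    (b' : Matrix (Fin s) (Fin k) ℂ) :
    hcat a a' * vcat b b' = a * b + a' * b' := by
  unfold hcat vcat
  rw [Matrix.submatrix_mul_equiv, Matrix.fromCols_mul_fromRows]
  rfl

end MatC

end AuxNR
section NormAux

open Matrix Finset ComplexConjugate

local notation "⟪" x ", " y "⟫" => @inner ℂ _ _ x y

lemma toEuclideanLin_coord {m n : ℕ} (A : Matrix (Fin m) (Fin n) ℂ)
    (v : EuclideanSpace ℂ (Fin n)) (i : Fin m) :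
    (Matrix.toEuclideanLin A v) i = ∑ j, A i j * v j := by
  simp [Matrix.toEuclideanLin_apply, Matrix.mulVec, dotProduct]

lemma toEuclideanLin_mul_apply {m n k : ℕ} (A : Matrix (Fin m) (Fin n) ℂ)
    (B : Matrix (Fin n) (Fin k) ℂ) (v : EuclideanSpace ℂ (Fin k)) :
    Matrix.toEuclideanLin (A * B) v = Matrix.toEuclideanLin A (Matrix.toEuclideanLin B v) := by
  apply PiLp.ext
  intro i
  simp only [toEuclideanLin_coord, Matrix.mul_apply, Finset.sum_mul, Finset.mul_sum]
  rw [Finset.sum_comm]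
  simp [mul_assoc]

lemma re_inner_self {n : ℕ} (v : EuclideanSpace ℂ (Fin n)) :
    RCLike.re (⟪v, v⟫ : ℂ) = ‖v‖ ^ 2 := inner_self_eq_norm_sq v

lemma matOpNorm_nonneg {m n : ℕ} (A : Matrix (Fin m) (Fin n) ℂ) : 0 ≤ matOpNorm A :=
  norm_nonneg _

lemma le_matOpNorm {m n : ℕ} (A : Matrix (Fin m) (Fin n) ℂ) (v : EuclideanSpace ℂ (Fin n)) :
    ‖Matrix.toEuclideanLin A v‖ ≤ matOpNorm A * ‖v‖ := by
  have := (LinearMap.toContinuousLinearMap (Matrix.toEuclideanLin A)).le_opNorm v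
  simpa [matOpNorm] using this

lemma matOpNorm_le {m n : ℕ} (A : Matrix (Fin m) (Fin n) ℂ) {M : ℝ} (hM : 0 ≤ M)
    (h : ∀ v : EuclideanSpace ℂ (Fin n), ‖Matrix.toEuclideanLin A v‖ ≤ M * ‖v‖) :
    matOpNorm A ≤ M := by
  apply ContinuousLinearMap.opNorm_le_bound _ hM
  intro v
  simpa using h v

lemma matOpNorm_zero {m n : ℕ} : matOpNorm (0 : Matrix (Fin m) (Fin n) ℂ) = 0 := by
  have h1 : matOpNorm (0 : Matrix (Fin m) (Fin n) ℂ) ≤ 0 :=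
    matOpNorm_le _ le_rfl (fun v => by simp)
  exact le_antisymm h1 (matOpNorm_nonneg _)

lemma matOpNorm_mul_le {m n k : ℕ} (A : Matrix (Fin m) (Fin n) ℂ)
    (B : Matrix (Fin n) (Fin k) ℂ) : matOpNorm (A * B) ≤ matOpNorm A * matOpNorm B := by
  apply matOpNorm_le _ (mul_nonneg (matOpNorm_nonneg _) (matOpNorm_nonneg _))
  intro v
  rw [toEuclideanLin_mul_apply]
  calc ‖Matrix.toEuclideanLin A (Matrix.toEuclideanLin B v)‖
      ≤ matOpNorm A * ‖Matrix.toEuclideanLin B v‖ := le_matOpNorm _ _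
    _ ≤ matOpNorm A * (matOpNorm B * ‖v‖) :=
        mul_le_mul_of_nonneg_left (le_matOpNorm _ _) (matOpNorm_nonneg _)
    _ = matOpNorm A * matOpNorm B * ‖v‖ := by ring

lemma matOpNorm_add_le {m n : ℕ} (A B : Matrix (Fin m) (Fin n) ℂ) :
    matOpNorm (A + B) ≤ matOpNorm A + matOpNorm B := by
  apply matOpNorm_le _ (add_nonneg (matOpNorm_nonneg _) (matOpNorm_nonneg _))
  intro v
  have : Matrix.toEuclideanLin (A + B) v =
      Matrix.toEuclideanLin A v + Matrix.toEuclideanLin B v := by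
    rw [map_add]; rfl
  rw [this]
  calc ‖Matrix.toEuclideanLin A v + Matrix.toEuclideanLin B v‖
      ≤ ‖Matrix.toEuclideanLin A v‖ + ‖Matrix.toEuclideanLin B v‖ := norm_add_le _ _
    _ ≤ matOpNorm A * ‖v‖ + matOpNorm B * ‖v‖ := add_le_add (le_matOpNorm _ _) (le_matOpNorm _ _)
    _ = (matOpNorm A + matOpNorm B) * ‖v‖ := by ring

lemma matOpNorm_smul {m n : ℕ} (c : ℂ) (A : Matrix (Fin m) (Fin n) ℂ) :
    matOpNorm (c • A) = ‖c‖ * matOpNorm A := by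
  unfold matOpNorm
  rw [(Matrix.toEuclideanLin).map_smul, (LinearMap.toContinuousLinearMap).map_smul, norm_smul]

lemma matOpNorm_smul_one_le {n : ℕ} (c : ℂ) :
    matOpNorm (c • (1 : Matrix (Fin n) (Fin n) ℂ)) ≤ ‖c‖ := by
  refine matOpNorm_le _ (norm_nonneg c) fun v => ?_
  have : Matrix.toEuclideanLin (c • (1 : Matrix (Fin n) (Fin n) ℂ)) v = c • v := by
    apply PiLp.ext
    intro i
    simp [toEuclideanLin_coord, Matrix.one_apply, ite_mul, Finset.sum_ite_eq]
  rw [this, norm_smul]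

lemma inner_toEuclideanLin_conjTranspose {m n : ℕ} (A : Matrix (Fin m) (Fin n) ℂ)
    (v : EuclideanSpace ℂ (Fin m)) (w : EuclideanSpace ℂ (Fin n)) :
    ⟪Matrix.toEuclideanLin Aᴴ v, w⟫ = ⟪v, Matrix.toEuclideanLin A w⟫ := by
  simp only [PiLp.inner_apply, RCLike.inner_apply, toEuclideanLin_coord,
    Matrix.conjTranspose_apply, map_sum, Finset.sum_mul, Finset.mul_sum]
  rw [Finset.sum_comm]
  congr 1; ext i; congr 1; ext j
  simp only [_root_.map_mul, Complex.star_def, Complex.conj_conj]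
  ring

lemma matOpNorm_conjTranspose {m n : ℕ} (A : Matrix (Fin m) (Fin n) ℂ) :
    matOpNorm Aᴴ = matOpNorm A := by
  have key : ∀ (p q : ℕ) (B : Matrix (Fin p) (Fin q) ℂ), matOpNorm Bᴴ ≤ matOpNorm B := by
    intro p q B
    apply matOpNorm_le _ (matOpNorm_nonneg B)
    intro v
    rcases eq_or_ne (‖Matrix.toEuclideanLin Bᴴ v‖) 0 with h | h
    · rw [h]; exact mul_nonneg (matOpNorm_nonneg _) (norm_nonneg _)
    · have h1 : ‖Matrix.toEuclideanLin Bᴴ v‖ ^ 2 =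
          RCLike.re ⟪Matrix.toEuclideanLin Bᴴ v, Matrix.toEuclideanLin Bᴴ v⟫ := by
        exact (re_inner_self _).symm
      have h2 : RCLike.re ⟪Matrix.toEuclideanLin Bᴴ v, Matrix.toEuclideanLin Bᴴ v⟫
          ≤ matOpNorm B * ‖v‖ * ‖Matrix.toEuclideanLin Bᴴ v‖ := by
        rw [inner_toEuclideanLin_conjTranspose]
        calc RCLike.re ⟪v, Matrix.toEuclideanLin B (Matrix.toEuclideanLin Bᴴ v)⟫
            ≤ ‖(⟪v, Matrix.toEuclideanLin B (Matrix.toEuclideanLin Bᴴ v)⟫ : ℂ)‖ :=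
              RCLike.re_le_norm _
          _ ≤ ‖v‖ * ‖Matrix.toEuclideanLin B (Matrix.toEuclideanLin Bᴴ v)‖ :=
              norm_inner_le_norm _ _
          _ ≤ ‖v‖ * (matOpNorm B * ‖Matrix.toEuclideanLin Bᴴ v‖) :=
              mul_le_mul_of_nonneg_left (le_matOpNorm _ _) (norm_nonneg _)
          _ = matOpNorm B * ‖v‖ * ‖Matrix.toEuclideanLin Bᴴ v‖ := by ring
      have h3 : ‖Matrix.toEuclideanLin Bᴴ v‖ ^ 2 ≤
          matOpNorm B * ‖v‖ * ‖Matrix.toEuclideanLin Bᴴ v‖ := h1 ▸ h2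
      have hpos : 0 < ‖Matrix.toEuclideanLin Bᴴ v‖ :=
        lt_of_le_of_ne (norm_nonneg _) (Ne.symm h)
      nlinarith
  have h1 := key n m Aᴴ
  rw [Matrix.conjTranspose_conjTranspose] at h1
  exact le_antisymm (key m n A) h1

lemma euclid_norm_sq {n : ℕ} (v : EuclideanSpace ℂ (Fin n)) : ‖v‖ ^ 2 = ∑ i, ‖v i‖ ^ 2 := by
  rw [EuclideanSpace.norm_eq, Real.sq_sqrt (by positivity)]

/-- key positivity estimate -/
lemma matOpNorm_mul_le_S {n r : ℕ} (a : Matrix (Fin n) (Fin r) ℂ)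
    (b : Matrix (Fin r) (Fin n) ℂ) :
    matOpNorm a * matOpNorm b ≤ matOpNorm (a * aᴴ + bᴴ * b) := by
  set S := a * aᴴ + bᴴ * b with hS
  have hSn : 0 ≤ matOpNorm S := matOpNorm_nonneg _
  have hinner : ∀ v : EuclideanSpace ℂ (Fin n),
      ‖Matrix.toEuclideanLin aᴴ v‖ ^ 2 + ‖Matrix.toEuclideanLin b v‖ ^ 2
        ≤ matOpNorm S * ‖v‖ ^ 2 := by
    intro v
    have e1 : Matrix.toEuclideanLin S v =
        Matrix.toEuclideanLin a (Matrix.toEuclideanLin aᴴ v)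
          + Matrix.toEuclideanLin bᴴ (Matrix.toEuclideanLin b v) := by
      rw [hS, map_add, LinearMap.add_apply, toEuclideanLin_mul_apply, toEuclideanLin_mul_apply]
    have e2 : RCLike.re ⟪v, Matrix.toEuclideanLin S v⟫ =
        ‖Matrix.toEuclideanLin aᴴ v‖ ^ 2 + ‖Matrix.toEuclideanLin b v‖ ^ 2 := by
      rw [e1, inner_add_right]
      have ha : ⟪v, Matrix.toEuclideanLin a (Matrix.toEuclideanLin aᴴ v)⟫
          = ⟪Matrix.toEuclideanLin aᴴ v, Matrix.toEuclideanLin aᴴ v⟫ := by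
        rw [inner_toEuclideanLin_conjTranspose]
      have hb : ⟪v, Matrix.toEuclideanLin bᴴ (Matrix.toEuclideanLin b v)⟫
          = ⟪Matrix.toEuclideanLin b v, Matrix.toEuclideanLin b v⟫ := by
        have h := inner_toEuclideanLin_conjTranspose bᴴ v (Matrix.toEuclideanLin b v)
        rw [Matrix.conjTranspose_conjTranspose] at h
        exact h.symm
      rw [ha, hb, map_add, re_inner_self, re_inner_self]
    have e3 : RCLike.re ⟪v, Matrix.toEuclideanLin S v⟫ ≤ matOpNorm S * ‖v‖ ^ 2 := by
      calc RCLike.re ⟪v, Matrix.toEuclideanLin S v⟫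
          ≤ ‖(⟪v, Matrix.toEuclideanLin S v⟫ : ℂ)‖ := RCLike.re_le_norm _
        _ ≤ ‖v‖ * ‖Matrix.toEuclideanLin S v‖ := norm_inner_le_norm _ _
        _ ≤ ‖v‖ * (matOpNorm S * ‖v‖) :=
            mul_le_mul_of_nonneg_left (le_matOpNorm _ _) (norm_nonneg _)
        _ = matOpNorm S * ‖v‖ ^ 2 := by ring
    rw [← e2]; exact e3
  have haH : matOpNorm aᴴ ≤ Real.sqrt (matOpNorm S) := by
    apply matOpNorm_le _ (Real.sqrt_nonneg _)
    intro v
    have h1 : ‖Matrix.toEuclideanLin aᴴ v‖ ^ 2 ≤ matOpNorm S * ‖v‖ ^ 2 := by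
      have := hinner v; nlinarith [sq_nonneg ‖Matrix.toEuclideanLin b v‖]
    calc ‖Matrix.toEuclideanLin aᴴ v‖ = Real.sqrt (‖Matrix.toEuclideanLin aᴴ v‖ ^ 2) := by
          rw [Real.sqrt_sq (norm_nonneg _)]
      _ ≤ Real.sqrt (matOpNorm S * ‖v‖ ^ 2) := Real.sqrt_le_sqrt h1
      _ = Real.sqrt (matOpNorm S) * ‖v‖ := by
          rw [Real.sqrt_mul hSn, Real.sqrt_sq (norm_nonneg _)]
  have hb : matOpNorm b ≤ Real.sqrt (matOpNorm S) := by
    apply matOpNorm_le _ (Real.sqrt_nonneg _)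
    intro v
    have h1 : ‖Matrix.toEuclideanLin b v‖ ^ 2 ≤ matOpNorm S * ‖v‖ ^ 2 := by
      have := hinner v; nlinarith [sq_nonneg ‖Matrix.toEuclideanLin aᴴ v‖]
    calc ‖Matrix.toEuclideanLin b v‖ = Real.sqrt (‖Matrix.toEuclideanLin b v‖ ^ 2) := by
          rw [Real.sqrt_sq (norm_nonneg _)]
      _ ≤ Real.sqrt (matOpNorm S * ‖v‖ ^ 2) := Real.sqrt_le_sqrt h1
      _ = Real.sqrt (matOpNorm S) * ‖v‖ := by
          rw [Real.sqrt_mul hSn, Real.sqrt_sq (norm_nonneg _)]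
  calc matOpNorm a * matOpNorm b = matOpNorm aᴴ * matOpNorm b := by
        rw [matOpNorm_conjTranspose]
    _ ≤ Real.sqrt (matOpNorm S) * Real.sqrt (matOpNorm S) :=
        mul_le_mul haH hb (matOpNorm_nonneg _) (Real.sqrt_nonneg _)
    _ = matOpNorm S := Real.mul_self_sqrt hSn

lemma matOpNorm_dsum_le {m n : ℕ} (S : Matrix (Fin m) (Fin m) ℂ)
    (S' : Matrix (Fin n) (Fin n) ℂ) :
    matOpNorm (dsum S S') ≤ max (matOpNorm S) (matOpNorm S') := by
  set M := max (matOpNorm S) (matOpNorm S') with hM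
  have hM0 : 0 ≤ M := le_max_of_le_left (matOpNorm_nonneg _)
  apply matOpNorm_le _ hM0
  intro v
  set v₁ : EuclideanSpace ℂ (Fin m) := WithLp.toLp 2 (fun i => v (Fin.castAdd n i)) with hv₁
  set v₂ : EuclideanSpace ℂ (Fin n) := WithLp.toLp 2 (fun i => v (Fin.natAdd m i)) with hv₂
  have hsplit : ‖v‖ ^ 2 = ‖v₁‖ ^ 2 + ‖v₂‖ ^ 2 := by
    rw [euclid_norm_sq, euclid_norm_sq, euclid_norm_sq, Fin.sum_univ_add]
  have hcoord1 : ∀ i : Fin m, (Matrix.toEuclideanLin (dsum S S') v) (Fin.castAdd n i)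
      = (Matrix.toEuclideanLin S v₁) i := by
    intro i
    simp [toEuclideanLin_coord, Fin.sum_univ_add, hv₁, Matrix.mulVec, dotProduct]
  have hcoord2 : ∀ i : Fin n, (Matrix.toEuclideanLin (dsum S S') v) (Fin.natAdd m i)
      = (Matrix.toEuclideanLin S' v₂) i := by
    intro i
    simp [toEuclideanLin_coord, Fin.sum_univ_add, hv₂, Matrix.mulVec, dotProduct]
  have hnorm : ‖Matrix.toEuclideanLin (dsum S S') v‖ ^ 2
      = ‖Matrix.toEuclideanLin S v₁‖ ^ 2 + ‖Matrix.toEuclideanLin S' v₂‖ ^ 2 := by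
    rw [euclid_norm_sq, euclid_norm_sq, euclid_norm_sq, Fin.sum_univ_add]
    congr 1
    · exact Finset.sum_congr rfl fun i _ => by rw [hcoord1]
    · exact Finset.sum_congr rfl fun i _ => by rw [hcoord2]
  have hb : ‖Matrix.toEuclideanLin (dsum S S') v‖ ^ 2 ≤ (M * ‖v‖) ^ 2 := by
    rw [hnorm]
    have h1 : ‖Matrix.toEuclideanLin S v₁‖ ≤ M * ‖v₁‖ :=
      le_trans (le_matOpNorm _ _) (mul_le_mul_of_nonneg_right (le_max_left _ _) (norm_nonneg _))
    have h2 : ‖Matrix.toEuclideanLin S' v₂‖ ≤ M * ‖v₂‖ :=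
      le_trans (le_matOpNorm _ _) (mul_le_mul_of_nonneg_right (le_max_right _ _) (norm_nonneg _))
    have e : (M * ‖v‖) ^ 2 = (M * ‖v₁‖) ^ 2 + (M * ‖v₂‖) ^ 2 := by
      calc (M * ‖v‖) ^ 2 = M ^ 2 * ‖v‖ ^ 2 := by ring
        _ = M ^ 2 * (‖v₁‖ ^ 2 + ‖v₂‖ ^ 2) := by rw [hsplit]
        _ = (M * ‖v₁‖) ^ 2 + (M * ‖v₂‖) ^ 2 := by ring
    rw [e]
    exact add_le_add (pow_le_pow_left₀ (norm_nonneg _) h1 2)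
      (pow_le_pow_left₀ (norm_nonneg _) h2 2)
  calc ‖Matrix.toEuclideanLin (dsum S S') v‖
      = Real.sqrt (‖Matrix.toEuclideanLin (dsum S S') v‖ ^ 2) := by
        rw [Real.sqrt_sq (norm_nonneg _)]
    _ ≤ Real.sqrt ((M * ‖v‖) ^ 2) := Real.sqrt_le_sqrt hb
    _ = M * ‖v‖ := Real.sqrt_sq (mul_nonneg hM0 (norm_nonneg _))

lemma matOpNorm_hcat_one_zero_le {m n : ℕ} :
    matOpNorm (hcat (1 : Matrix (Fin m) (Fin m) ℂ) (0 : Matrix (Fin m) (Fin n) ℂ)) ≤ 1 := by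
  apply matOpNorm_le _ zero_le_one
  intro v
  set v₁ : EuclideanSpace ℂ (Fin m) := WithLp.toLp 2 (fun i => v (Fin.castAdd n i)) with hv₁
  have hcoord : ∀ i : Fin m,
      (Matrix.toEuclideanLin (hcat (1 : Matrix (Fin m) (Fin m) ℂ)
        (0 : Matrix (Fin m) (Fin n) ℂ)) v) i = v (Fin.castAdd n i) := by
    intro i
    simp [toEuclideanLin_coord, Fin.sum_univ_add, Matrix.one_apply, ite_mul,
      Finset.sum_ite_eq]
  have hsq : ‖Matrix.toEuclideanLin (hcat (1 : Matrix (Fin m) (Fin m) ℂ)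
      (0 : Matrix (Fin m) (Fin n) ℂ)) v‖ ^ 2 ≤ ‖v‖ ^ 2 := by
    rw [euclid_norm_sq, euclid_norm_sq, Fin.sum_univ_add]
    have : ∑ i : Fin m, ‖(Matrix.toEuclideanLin (hcat (1 : Matrix (Fin m) (Fin m) ℂ)
        (0 : Matrix (Fin m) (Fin n) ℂ)) v) i‖ ^ 2 = ∑ i : Fin m, ‖v (Fin.castAdd n i)‖ ^ 2 :=
      Finset.sum_congr rfl fun i _ => by rw [hcoord]
    rw [this]
    have : (0:ℝ) ≤ ∑ i : Fin n, ‖v (Fin.natAdd m i)‖ ^ 2 := by positivity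
    linarith
  calc ‖_‖ = Real.sqrt (‖Matrix.toEuclideanLin (hcat (1 : Matrix (Fin m) (Fin m) ℂ)
        (0 : Matrix (Fin m) (Fin n) ℂ)) v‖ ^ 2) := by rw [Real.sqrt_sq (norm_nonneg _)]
    _ ≤ Real.sqrt (‖v‖ ^ 2) := Real.sqrt_le_sqrt hsq
    _ = 1 * ‖v‖ := by rw [Real.sqrt_sq (norm_nonneg _), one_mul]

lemma matOpNorm_hcat_zero_one_le {m n : ℕ} :
    matOpNorm (hcat (0 : Matrix (Fin n) (Fin m) ℂ) (1 : Matrix (Fin n) (Fin n) ℂ)) ≤ 1 := by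
  apply matOpNorm_le _ zero_le_one
  intro v
  have hcoord : ∀ i : Fin n,
      (Matrix.toEuclideanLin (hcat (0 : Matrix (Fin n) (Fin m) ℂ)
        (1 : Matrix (Fin n) (Fin n) ℂ)) v) i = v (Fin.natAdd m i) := by
    intro i
    simp [toEuclideanLin_coord, Fin.sum_univ_add, Matrix.one_apply, ite_mul,
      Finset.sum_ite_eq]
  have hsq : ‖Matrix.toEuclideanLin (hcat (0 : Matrix (Fin n) (Fin m) ℂ)
      (1 : Matrix (Fin n) (Fin n) ℂ)) v‖ ^ 2 ≤ ‖v‖ ^ 2 := by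
    rw [euclid_norm_sq, euclid_norm_sq, Fin.sum_univ_add]
    have : ∑ i : Fin n, ‖(Matrix.toEuclideanLin (hcat (0 : Matrix (Fin n) (Fin m) ℂ)
        (1 : Matrix (Fin n) (Fin n) ℂ)) v) i‖ ^ 2 = ∑ i : Fin n, ‖v (Fin.natAdd m i)‖ ^ 2 :=
      Finset.sum_congr rfl fun i _ => by rw [hcoord]
    rw [this]
    have : (0:ℝ) ≤ ∑ i : Fin m, ‖v (Fin.castAdd n i)‖ ^ 2 := by positivity
    linarith
  calc ‖_‖ = Real.sqrt (‖Matrix.toEuclideanLin (hcat (0 : Matrix (Fin n) (Fin m) ℂ)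
        (1 : Matrix (Fin n) (Fin n) ℂ)) v‖ ^ 2) := by rw [Real.sqrt_sq (norm_nonneg _)]
    _ ≤ Real.sqrt (‖v‖ ^ 2) := Real.sqrt_le_sqrt hsq
    _ = 1 * ‖v‖ := by rw [Real.sqrt_sq (norm_nonneg _), one_mul]

end NormAux

noncomputable section WmaxAux

open Matrix

variable {X : Type u} [AddCommGroup X] [Module ℂ X] (OS : OSNorm X)

def wSet (n : ℕ) (x : Matrix (Fin n) (Fin n) X) : Set ℝ :=
  {t | ∃ (r : ℕ) (a : Matrix (Fin n) (Fin r) ℂ) (y : Matrix (Fin r) (Fin r) X)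
      (b : Matrix (Fin r) (Fin n) ℂ),
    x = scalarMulRight (scalarMulLeft a y) b ∧ OS.O r y = 1 ∧
      t = (1 / 2) * matOpNorm (a * aᴴ + bᴴ * b)}

lemma wmax_eq_sInf (n : ℕ) (x : Matrix (Fin n) (Fin n) X) :
    Wmax OS n x = sInf (wSet OS n x) := rfl

lemma wSet_nonneg {n : ℕ} {x : Matrix (Fin n) (Fin n) X} :
    ∀ t ∈ wSet OS n x, 0 ≤ t := by
  rintro t ⟨r, a, y, b, hx, hy, rfl⟩
  have := matOpNorm_nonneg (a * aᴴ + bᴴ * b)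
  linarith

lemma wSet_bddBelow {n : ℕ} {x : Matrix (Fin n) (Fin n) X} : BddBelow (wSet OS n x) :=
  ⟨0, fun t ht => wSet_nonneg OS t ht⟩

lemma wmax_nonneg (n : ℕ) (x : Matrix (Fin n) (Fin n) X) : 0 ≤ Wmax OS n x :=
  Real.sInf_nonneg (wSet_nonneg OS)

lemma wmax_le_of_mem {n : ℕ} {x : Matrix (Fin n) (Fin n) X} {t : ℝ}
    (ht : t ∈ wSet OS n x) : Wmax OS n x ≤ t :=
  csInf_le (wSet_bddBelow OS) ht

lemma O_le_of_mem {n : ℕ} {x : Matrix (Fin n) (Fin n) X} {t : ℝ}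
    (ht : t ∈ wSet OS n x) : OS.O n x ≤ 2 * t := by
  obtain ⟨r, a, y, b, hx, hy, rfl⟩ := ht
  have h1 := OS.cond_OII r n a y b
  rw [← hx, hy] at h1
  have h2 := matOpNorm_mul_le_S a b
  linarith [h1, h2]

lemma zero_mem_wSet (hX : ∃ x₀ : X, x₀ ≠ 0) (n : ℕ) :
    (0 : ℝ) ∈ wSet OS n (0 : Matrix (Fin n) (Fin n) X) := by
  obtain ⟨x₀, hx₀⟩ := hX
  set y₀ : Matrix (Fin 1) (Fin 1) X := Matrix.of fun _ _ => x₀ with hy₀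
  have hy₀ne : y₀ ≠ 0 := by
    intro h
    apply hx₀
    have := congrFun (congrFun h 0) 0
    exact this
  set c : ℝ := OS.O 1 y₀ with hc
  have hcne : c ≠ 0 := fun h => hy₀ne ((OS.eq_zero_iff 1 y₀).1 h)
  have hcpos : 0 < c := lt_of_le_of_ne (OS.nonneg 1 y₀) (Ne.symm hcne)
  refine ⟨1, 0, ((c⁻¹ : ℝ) : ℂ) • y₀, 0, ?_, ?_, ?_⟩
  · rw [sl_zero, sr_zero_left]
  · rw [OS.smul_eq]
    rw [Complex.norm_real, Real.norm_eq_abs, abs_of_nonneg (inv_nonneg.2 hcpos.le)]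
    exact inv_mul_cancel₀ hcne
  · rw [Matrix.zero_mul, Matrix.conjTranspose_zero, Matrix.zero_mul, add_zero, matOpNorm_zero]
    ring

lemma wSet_nonempty (hX : ∃ x₀ : X, x₀ ≠ 0) (n : ℕ) (x : Matrix (Fin n) (Fin n) X) :
    (wSet OS n x).Nonempty := by
  rcases eq_or_ne x 0 with rfl | hx
  · exact ⟨0, zero_mem_wSet OS hX n⟩
  · set c : ℝ := OS.O n x with hc
    have hcne : c ≠ 0 := fun h => hx ((OS.eq_zero_iff n x).1 h)
    have hcpos : 0 < c := lt_of_le_of_ne (OS.nonneg n x) (Ne.symm hcne)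
    set d : ℂ := ((Real.sqrt c : ℝ) : ℂ) with hd
    refine ⟨_, ⟨n, d • 1, ((c⁻¹ : ℝ) : ℂ) • x, d • 1, ?_, ?_, rfl⟩⟩
    · rw [sl_smul_one, sr_smul_one, smul_smul, smul_smul]
      rw [hd, ← Complex.ofReal_mul, Real.mul_self_sqrt hcpos.le, ← Complex.ofReal_mul,
        mul_inv_cancel₀ hcne]
      simp
    · rw [OS.smul_eq, Complex.norm_real, Real.norm_eq_abs, abs_of_nonneg (inv_nonneg.2 hcpos.le)]
      exact inv_mul_cancel₀ hcne

lemma deg_matrix (h : ¬∃ x₀ : X, x₀ ≠ 0) {k l : ℕ} (x : Matrix (Fin k) (Fin l) X) :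
    x = 0 := by
  push_neg at h
  ext i j
  exact h _

lemma wSet_empty (h : ¬∃ x₀ : X, x₀ ≠ 0) (n : ℕ) (x : Matrix (Fin n) (Fin n) X) :
    wSet OS n x = ∅ := by
  rw [Set.eq_empty_iff_forall_notMem]
  rintro t ⟨r, a, y, b, hx, hy, rfl⟩
  have hy0 : y = 0 := deg_matrix h y
  rw [hy0, (OS.eq_zero_iff r 0).2 rfl] at hy
  exact one_ne_zero hy.symm

lemma deg_wmax (h : ¬∃ x₀ : X, x₀ ≠ 0) (n : ℕ) (x : Matrix (Fin n) (Fin n) X) :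
    Wmax OS n x = 0 := by
  rw [wmax_eq_sInf, wSet_empty OS h, Real.sInf_empty]

lemma wmax_zero (hX : ∃ x₀ : X, x₀ ≠ 0) (n : ℕ) :
    Wmax OS n (0 : Matrix (Fin n) (Fin n) X) = 0 :=
  le_antisymm (wmax_le_of_mem OS (zero_mem_wSet OS hX n)) (wmax_nonneg OS n 0)

/-- the infimum-passing engine -/
lemma wmax_le_mul {C : ℝ} (hC : 0 ≤ C) {m n : ℕ} {x : Matrix (Fin m) (Fin m) X}
    {z : Matrix (Fin n) (Fin n) X} (hne : (wSet OS m x).Nonempty)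
    (h : ∀ t ∈ wSet OS m x, Wmax OS n z ≤ C * t) :
    Wmax OS n z ≤ C * Wmax OS m x := by
  rcases eq_or_lt_of_le hC with rfl | hCpos
  · obtain ⟨t, ht⟩ := hne
    have := h t ht
    simpa using this
  · refine le_of_forall_pos_le_add fun ε hε => ?_
    obtain ⟨t, ht, hlt⟩ := Real.lt_sInf_add_pos hne (div_pos hε hCpos)
    calc Wmax OS n z ≤ C * t := h t ht
      _ ≤ C * (sInf (wSet OS m x) + ε / C) :=
          mul_le_mul_of_nonneg_left hlt.le hC
      _ = C * Wmax OS m x + ε := by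
          rw [mul_add, mul_div_cancel₀ _ (ne_of_gt hCpos), wmax_eq_sInf]

end WmaxAux

noncomputable section MainAux

open Matrix

variable {X : Type u} [AddCommGroup X] [Module ℂ X] (OS : OSNorm X)

lemma wmax_WII (m n : ℕ) (α : Matrix (Fin n) (Fin m) ℂ) (x : Matrix (Fin m) (Fin m) X) :
    Wmax OS n (scalarMulRight (scalarMulLeft α x) αᴴ) ≤ matOpNorm α ^ 2 * Wmax OS m x := by
  by_cases hX : ∃ x₀ : X, x₀ ≠ 0
  · apply wmax_le_mul OS (pow_nonneg (matOpNorm_nonneg α) 2) (wSet_nonempty OS hX m x)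
    rintro t ⟨r, a, y, b, hx, hy, rfl⟩
    have halg : scalarMulRight (scalarMulLeft (α * a) y) (b * αᴴ)
        = scalarMulRight (scalarMulLeft α x) αᴴ := by
      rw [hx, sl_mul, sr_mul, ← sl_sr_comm]
    have hmem : (1 / 2) * matOpNorm ((α * a) * (α * a)ᴴ + (b * αᴴ)ᴴ * (b * αᴴ))
        ∈ wSet OS n (scalarMulRight (scalarMulLeft α x) αᴴ) :=
      ⟨r, α * a, y, b * αᴴ, halg.symm, hy, rfl⟩
    refine le_trans (wmax_le_of_mem OS hmem) ?_
    have hS : (α * a) * (α * a)ᴴ + (b * αᴴ)ᴴ * (b * αᴴ)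
        = α * ((a * aᴴ + bᴴ * b) * αᴴ) := by
      rw [Matrix.conjTranspose_mul, Matrix.conjTranspose_mul,
        Matrix.conjTranspose_conjTranspose]
      simp only [Matrix.add_mul, Matrix.mul_add, Matrix.mul_assoc]
    rw [hS]
    have h1 : matOpNorm (α * ((a * aᴴ + bᴴ * b) * αᴴ))
        ≤ matOpNorm α * (matOpNorm (a * aᴴ + bᴴ * b) * matOpNorm αᴴ) :=
      le_trans (matOpNorm_mul_le _ _)
        (mul_le_mul_of_nonneg_left (matOpNorm_mul_le _ _) (matOpNorm_nonneg _))
    rw [matOpNorm_conjTranspose] at h1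
    nlinarith [matOpNorm_nonneg (a * aᴴ + bᴴ * b), matOpNorm_nonneg α]
  · rw [deg_wmax OS hX, deg_wmax OS hX, mul_zero]

lemma wmax_add_le (n : ℕ) (x x' : Matrix (Fin n) (Fin n) X) :
    Wmax OS n (x + x') ≤ Wmax OS n x + Wmax OS n x' := by
  by_cases hX : ∃ x₀ : X, x₀ ≠ 0
  · refine le_of_forall_pos_le_add fun ε hε => ?_
    obtain ⟨t, ht, hlt⟩ := Real.lt_sInf_add_pos (wSet_nonempty OS hX n x) (half_pos hε)
    obtain ⟨t', ht', hlt'⟩ := Real.lt_sInf_add_pos (wSet_nonempty OS hX n x') (half_pos hε)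
    obtain ⟨r, a, y, b, hx, hy, rfl⟩ := ht
    obtain ⟨r', a', y', b', hx', hy', rfl⟩ := ht'
    have halg : x + x' = scalarMulRight (scalarMulLeft (hcat a a') (dsum y y')) (vcat b b') := by
      rw [sl_hcat_dsum, sr_hcat_vcat, ← hx, ← hx']
    have hOy : OS.O (r + r') (dsum y y') = 1 := by
      rw [← blockDiag_eq_dsum, OS.cond_OI, hy, hy', max_self]
    have hmem : (1 / 2) * matOpNorm (hcat a a' * (hcat a a')ᴴ + (vcat b b')ᴴ * vcat b b')
        ∈ wSet OS n (x + x') := ⟨r + r', hcat a a', dsum y y', vcat b b', halg, hOy, rfl⟩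
    refine le_trans (wmax_le_of_mem OS hmem) ?_
    have hS : hcat a a' * (hcat a a')ᴴ + (vcat b b')ᴴ * vcat b b'
        = (a * aᴴ + bᴴ * b) + (a' * a'ᴴ + b'ᴴ * b') := by
      rw [hcat_conjTranspose, vcat_conjTranspose, hcat_mul_vcat, hcat_mul_vcat]
      abel
    rw [hS]
    have h1 := matOpNorm_add_le (a * aᴴ + bᴴ * b) (a' * a'ᴴ + b'ᴴ * b')
    rw [wmax_eq_sInf OS n x, wmax_eq_sInf OS n x']
    linarith
  · rw [deg_wmax OS hX, deg_wmax OS hX, deg_wmax OS hX]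
    norm_num

lemma wmax_smul_le (hX : ∃ x₀ : X, x₀ ≠ 0) (n : ℕ) (c : ℂ) (x : Matrix (Fin n) (Fin n) X) :
    Wmax OS n (c • x) ≤ ‖c‖ * Wmax OS n x := by
  obtain ⟨d, hd⟩ := IsAlgClosed.exists_pow_nat_eq c (n := 2) (by norm_num)
  apply wmax_le_mul OS (norm_nonneg c) (wSet_nonempty OS hX n x)
  rintro t ⟨r, a, y, b, hx, hy, rfl⟩
  have hdd : d * d = c := by rw [← hd]; ring
  have halg : c • x = scalarMulRight (scalarMulLeft (d • a) y) (d • b) := by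
    rw [sl_smul, sr_smul, sr_smul_left, smul_smul, hdd, hx]
  have hmem : (1 / 2) * matOpNorm ((d • a) * (d • a)ᴴ + (d • b)ᴴ * (d • b))
      ∈ wSet OS n (c • x) := ⟨r, d • a, y, d • b, halg, hy, rfl⟩
  refine le_trans (wmax_le_of_mem OS hmem) ?_
  have habs : ‖d‖ ^ 2 = ‖c‖ := by
    rw [← norm_pow, hd]
  have hcoef : d * star d = ((‖c‖ : ℝ) : ℂ) := by
    rw [Complex.star_def, Complex.mul_conj, Complex.normSq_eq_norm_sq, habs]
  have hS : (d • a) * (d • a)ᴴ + (d • b)ᴴ * (d • b)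
      = ((‖c‖ : ℝ) : ℂ) • (a * aᴴ + bᴴ * b) := by
    rw [Matrix.conjTranspose_smul, Matrix.conjTranspose_smul,
      Matrix.smul_mul, Matrix.mul_smul, Matrix.smul_mul, Matrix.mul_smul,
      smul_smul, smul_smul, mul_comm (star d) d, hcoef, ← smul_add]
  rw [hS, matOpNorm_smul, Complex.norm_real, Real.norm_eq_abs,
    abs_of_nonneg (norm_nonneg c)]
  ring_nf
  linarith [le_refl (‖c‖ * matOpNorm (a * aᴴ + bᴴ * b))]

lemma wmax_smul_eq (n : ℕ) (c : ℂ) (x : Matrix (Fin n) (Fin n) X) :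
    Wmax OS n (c • x) = ‖c‖ * Wmax OS n x := by
  by_cases hX : ∃ x₀ : X, x₀ ≠ 0
  · rcases eq_or_ne c 0 with rfl | hc
    · rw [zero_smul, wmax_zero OS hX, norm_zero, zero_mul]
    · refine le_antisymm (wmax_smul_le OS hX n c x) ?_
      have h := wmax_smul_le OS hX n c⁻¹ (c • x)
      rw [smul_smul, inv_mul_cancel₀ hc, one_smul, norm_inv] at h
      have h2 := mul_le_mul_of_nonneg_left h (norm_nonneg c)
      rw [← mul_assoc, mul_inv_cancel₀ (norm_ne_zero_iff.2 hc), one_mul] at h2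
      exact h2
  · rw [deg_wmax OS hX, deg_wmax OS hX, mul_zero]

lemma wmax_eq_zero_iff (n : ℕ) (x : Matrix (Fin n) (Fin n) X) :
    Wmax OS n x = 0 ↔ x = 0 := by
  by_cases hX : ∃ x₀ : X, x₀ ≠ 0
  · constructor
    · intro h
      have hO : OS.O n x ≤ 0 := by
        have hlb : OS.O n x / 2 ≤ sInf (wSet OS n x) := by
          apply le_csInf (wSet_nonempty OS hX n x)
          intro t ht
          linarith [O_le_of_mem OS ht]
        rw [← wmax_eq_sInf, h] at hlb
        linarith
      exact (OS.eq_zero_iff n x).1 (le_antisymm hO (OS.nonneg n x))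
    · rintro rfl
      exact wmax_zero OS hX n
  · constructor
    · intro _
      exact deg_matrix hX x
    · intro _
      exact deg_wmax OS hX n x

lemma wmax_WI (m n : ℕ) (x : Matrix (Fin m) (Fin m) X) (y : Matrix (Fin n) (Fin n) X) :
    Wmax OS (m + n) (blockDiag x y) = max (Wmax OS m x) (Wmax OS n y) := by
  by_cases hX : ∃ x₀ : X, x₀ ≠ 0
  · apply le_antisymm
    · refine le_of_forall_pos_le_add fun ε hε => ?_
      obtain ⟨t, ht, hlt⟩ := Real.lt_sInf_add_pos (wSet_nonempty OS hX m x) hε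
      obtain ⟨t', ht', hlt'⟩ := Real.lt_sInf_add_pos (wSet_nonempty OS hX n y) hε
      obtain ⟨r, a, z, b, hx, hz, rfl⟩ := ht
      obtain ⟨r', a', z', b', hy, hz', rfl⟩ := ht'
      have halg : blockDiag x y
          = scalarMulRight (scalarMulLeft (dsum a a') (dsum z z')) (dsum b b') := by
        rw [sl_dsum_dsum, sr_dsum_dsum, ← hx, ← hy, blockDiag_eq_dsum]
      have hOz : OS.O (r + r') (dsum z z') = 1 := by
        rw [← blockDiag_eq_dsum, OS.cond_OI, hz, hz', max_self]
      have hmem : (1 / 2) * matOpNorm (dsum a a' * (dsum a a')ᴴ + (dsum b b')ᴴ * dsum b b')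
          ∈ wSet OS (m + n) (blockDiag x y) :=
        ⟨r + r', dsum a a', dsum z z', dsum b b', halg, hOz, rfl⟩
      have hS : dsum a a' * (dsum a a')ᴴ + (dsum b b')ᴴ * dsum b b'
          = dsum (a * aᴴ + bᴴ * b) (a' * a'ᴴ + b'ᴴ * b') := by
        rw [dsum_conjTranspose, dsum_conjTranspose, dsum_mul_dsum, dsum_mul_dsum, dsum_add]
      have hval : (1 / 2) * matOpNorm (dsum a a' * (dsum a a')ᴴ + (dsum b b')ᴴ * dsum b b')
          ≤ max ((1 / 2) * matOpNorm (a * aᴴ + bᴴ * b))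
              ((1 / 2) * matOpNorm (a' * a'ᴴ + b'ᴴ * b')) := by
        rw [hS]
        have := matOpNorm_dsum_le (a * aᴴ + bᴴ * b) (a' * a'ᴴ + b'ᴴ * b')
        rcases le_total (matOpNorm (a * aᴴ + bᴴ * b)) (matOpNorm (a' * a'ᴴ + b'ᴴ * b')) with
          hc | hc
        · rw [max_eq_right hc] at this
          refine le_trans (by linarith) (le_max_right _ _)
        · rw [max_eq_left hc] at this
          refine le_trans (by linarith) (le_max_left _ _)
      refine le_trans (wmax_le_of_mem OS hmem) (le_trans hval ?_)
      rw [wmax_eq_sInf OS m x, wmax_eq_sInf OS n y]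
      have := max_le_max hlt.le hlt'.le
      calc max ((1 / 2) * matOpNorm (a * aᴴ + bᴴ * b))
            ((1 / 2) * matOpNorm (a' * a'ᴴ + b'ᴴ * b'))
          ≤ max (sInf (wSet OS m x) + ε) (sInf (wSet OS n y) + ε) := this
        _ = max (sInf (wSet OS m x)) (sInf (wSet OS n y)) + ε := (max_add_add_right _ _ _)
    · apply max_le
      · have h := wmax_WII OS (m + n) m
          (hcat (1 : Matrix (Fin m) (Fin m) ℂ) (0 : Matrix (Fin m) (Fin n) ℂ)) (blockDiag x y)
        have halg : scalarMulRight (scalarMulLeft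
            (hcat (1 : Matrix (Fin m) (Fin m) ℂ) (0 : Matrix (Fin m) (Fin n) ℂ))
            (blockDiag x y))
            (hcat (1 : Matrix (Fin m) (Fin m) ℂ) (0 : Matrix (Fin m) (Fin n) ℂ))ᴴ = x := by
          rw [hcat_conjTranspose, Matrix.conjTranspose_one, Matrix.conjTranspose_zero,
            blockDiag_eq_dsum, sl_hcat_dsum, sl_one, sl_zero, sr_hcat_vcat, sr_one,
            sr_zero_left, add_zero]
        rw [halg] at h
        refine le_trans h ?_
        have hb : matOpNorm (hcat (1 : Matrix (Fin m) (Fin m) ℂ)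
            (0 : Matrix (Fin m) (Fin n) ℂ)) ^ 2 ≤ 1 :=
          pow_le_one₀ (matOpNorm_nonneg _) matOpNorm_hcat_one_zero_le
        calc _ ≤ 1 * Wmax OS (m + n) (blockDiag x y) :=
              mul_le_mul_of_nonneg_right hb (wmax_nonneg OS _ _)
          _ = _ := one_mul _
      · have h := wmax_WII OS (m + n) n
          (hcat (0 : Matrix (Fin n) (Fin m) ℂ) (1 : Matrix (Fin n) (Fin n) ℂ)) (blockDiag x y)
        have halg : scalarMulRight (scalarMulLeft
            (hcat (0 : Matrix (Fin n) (Fin m) ℂ) (1 : Matrix (Fin n) (Fin n) ℂ))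
            (blockDiag x y))
            (hcat (0 : Matrix (Fin n) (Fin m) ℂ) (1 : Matrix (Fin n) (Fin n) ℂ))ᴴ = y := by
          rw [hcat_conjTranspose, Matrix.conjTranspose_one, Matrix.conjTranspose_zero,
            blockDiag_eq_dsum, sl_hcat_dsum, sl_one, sl_zero, sr_hcat_vcat, sr_one,
            sr_zero_left, zero_add]
        rw [halg] at h
        refine le_trans h ?_
        have hb : matOpNorm (hcat (0 : Matrix (Fin n) (Fin m) ℂ)
            (1 : Matrix (Fin n) (Fin n) ℂ)) ^ 2 ≤ 1 :=
          pow_le_one₀ (matOpNorm_nonneg _) matOpNorm_hcat_zero_one_le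
        calc _ ≤ 1 * Wmax OS (m + n) (blockDiag x y) :=
              mul_le_mul_of_nonneg_right hb (wmax_nonneg OS _ _)
          _ = _ := one_mul _
  · rw [deg_wmax OS hX, deg_wmax OS hX, deg_wmax OS hX, max_self]

end MainAux

/-- for an operator space `(X, 𝒪_n)`, `𝒲_max` is a norm on each `M_n(X)` and the
sequence `𝒲_max` satisfies the conditions (WI) and (WII). -/
theorem stmt_8 {X : Type u} [AddCommGroup X] [Module ℂ X] (OS : OSNorm X) :
    ∃ WN : NRNorm X, ∀ (n : ℕ) (x : Matrix (Fin n) (Fin n) X),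
      WN.W n x = Wmax OS n x := by
  refine ⟨⟨fun n x => Wmax OS n x, wmax_nonneg OS, wmax_eq_zero_iff OS, wmax_add_le OS,
    wmax_smul_eq OS, wmax_WI OS, wmax_WII OS⟩, fun n x => rfl⟩
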